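/- Let v, w be nonzero vectors in F_2^n with v·w = 0 (Euclidean inner product). The number of k_2-dimensional subspaces C_2 of F_2^n such that v ∈ C_2 and w ∈ C_2^⊥ equals the Gaussian binomial coefficient [n-2 choose k_2-1]_2. -/

import Mathlib

/-- `[m]! = ∏_{i=1}^m (2^i - 1)`. -/
noncomputable def gaussFact (m : ℕ) : ℚ := ∏ i ∈ Finset.range m, ((2:ℚ)^(i+1) - 1)

/-- Binary Gaussian binomial coefficient `[n choose k]_2`. -/
noncomputable def gaussBinom (n k : ℕ) : ℚ := gaussFact n / (gaussFact k * gaussFact (n - k))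



lemma gaussFact_pos (m : ℕ) : 0 < gaussFact m := by
  apply Finset.prod_pos
  intro i _
  have : (2:ℚ)^1 ≤ 2^(i+1) := by
    apply pow_le_pow_right₀ (by norm_num); omega
  norm_num at this ⊢; linarith

lemma gaussFact_shift {m k : ℕ} (h : k ≤ m) :
    (∏ i ∈ Finset.range k, ((2:ℚ)^(m-i) - 1)) * gaussFact (m - k) = gaussFact m := by
  induction k with
  | zero => simp [gaussFact]
  | succ k ih =>
    have hk : k ≤ m := by omega
    have h1 : m - k = (m - (k+1)) + 1 := by omega
    have h2 : gaussFact (m - k) = gaussFact (m - (k+1)) * ((2:ℚ)^(m-k) - 1) := by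
      rw [h1, gaussFact, Finset.prod_range_succ, ← gaussFact, ← h1]
    rw [Finset.prod_range_succ, ← ih hk, h2]
    ring

lemma prod_pow_sub (m k : ℕ) (h : k ≤ m) :
    (∏ i ∈ Finset.range k, ((2:ℚ)^m - 2^i))
      = 2^(∑ i ∈ Finset.range k, i) * ∏ i ∈ Finset.range k, ((2:ℚ)^(m-i) - 1) := by
  rw [← Finset.prod_pow_eq_pow_sum, ← Finset.prod_mul_distrib]
  apply Finset.prod_congr rfl
  intro i hi
  have hi' : i ≤ m := by have := Finset.mem_range.mp hi; omega
  have : (2:ℚ)^i * 2^(m-i) = 2^m := by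
    rw [← pow_add]; congr 1; omega
  ring_nf
  linear_combination -this

lemma gaussBinom_eq_prod_div {m k : ℕ} (h : k ≤ m) :
    gaussBinom m k = (∏ i ∈ Finset.range k, ((2:ℚ)^m - 2^i))
      / (∏ i ∈ Finset.range k, ((2:ℚ)^k - 2^i)) := by
  have h1 := gaussFact_shift h
  have h2 := gaussFact_shift (le_refl k)
  simp only [Nat.sub_self, gaussFact, Finset.range_zero, Finset.prod_empty, mul_one] at h2
  have h2' : (∏ i ∈ Finset.range k, ((2:ℚ)^(k-i) - 1)) = gaussFact k := h2
  have hk0 : gaussFact k ≠ 0 := ne_of_gt (gaussFact_pos k)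
  have hmk0 : gaussFact (m-k) ≠ 0 := ne_of_gt (gaussFact_pos (m-k))
  have hp2 : (2:ℚ)^(∑ i ∈ Finset.range k, i) ≠ 0 := by positivity
  rw [gaussBinom, prod_pow_sub m k h, prod_pow_sub k k le_rfl, h2', ← h1]
  field_simp

open Module Submodule


variable {V : Type*} [AddCommGroup V] [Module (ZMod 2) V] [Finite V]

/-- span of an independent family of size `finrank` inside a submodule maps onto it. -/
lemma span_map_eq {S : Submodule (ZMod 2) V} {k : ℕ} (hS : finrank (ZMod 2) S = k)
    (t : Fin k → S) (ht : LinearIndependent (ZMod 2) t) :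
    Submodule.span (ZMod 2) (Set.range (fun i => (t i : V))) = S := by
  have : Module.Finite (ZMod 2) V := Module.Finite.of_finite
  have htop : Submodule.span (ZMod 2) (Set.range t) = ⊤ :=
    ht.span_eq_top_of_card_eq_finrank' (by simp [hS])
  have : (fun i => (t i : V)) = S.subtype ∘ t := rfl
  rw [this, Set.range_comp, ← Submodule.map_span, htop, Submodule.map_top,
    Submodule.range_subtype]

noncomputable def sigmaEquiv (k : ℕ) :
    (Σ S : {S : Submodule (ZMod 2) V // finrank (ZMod 2) S = k},
        {t : Fin k → S.1 // LinearIndependent (ZMod 2) t})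
      ≃ {s : Fin k → V // LinearIndependent (ZMod 2) s} := by
  apply Equiv.ofBijective
    (fun x => ⟨fun i => (x.2.1 i : V), x.2.2.map' x.1.1.subtype (Submodule.ker_subtype _)⟩)
  constructor
  · rintro ⟨⟨S, hS⟩, ⟨t, ht⟩⟩ ⟨⟨S', hS'⟩, ⟨t', ht'⟩⟩ h
    replace h : (fun i => (t i : V)) = fun i => (t' i : V) := congrArg Subtype.val h
    have hSS : S = S' := by
      rw [← span_map_eq hS t ht, ← span_map_eq hS' t' ht', h]
    subst hSS
    have htt : t = t' := by
      funext i; exact Subtype.ext (congrFun h i)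
    subst htt; rfl
  · rintro ⟨s, hs⟩
    have : Module.Finite (ZMod 2) V := Module.Finite.of_finite
    refine ⟨⟨⟨Submodule.span (ZMod 2) (Set.range s), ?_⟩,
      ⟨fun i => ⟨s i, Submodule.subset_span ⟨i, rfl⟩⟩, ?_⟩⟩, rfl⟩
    · rw [finrank_span_eq_card hs, Fintype.card_fin]
    · exact hs.of_comp (Submodule.span (ZMod 2) (Set.range s)).subtype

lemma card_submodules {k : ℕ} (hk : k ≤ finrank (ZMod 2) V) :
    (Nat.card {S : Submodule (ZMod 2) V // finrank (ZMod 2) S = k} : ℚ)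
      = gaussBinom (finrank (ZMod 2) V) k := by
  have : Module.Finite (ZMod 2) V := Module.Finite.of_finite
  have := Fintype.ofFinite V
  set m := finrank (ZMod 2) V with hm
  have hcLI : Nat.card {s : Fin k → V // LinearIndependent (ZMod 2) s}
      = ∏ i : Fin k, (2^m - 2^(i:ℕ)) := by
    have := card_linearIndependent (K := ZMod 2) (V := V) hk
    simpa using this
  have hsig := Nat.card_congr (sigmaEquiv (V := V) k)
  classical
  letI : Fintype {S : Submodule (ZMod 2) V // finrank (ZMod 2) S = k} := Fintype.ofFinite _
  letI : ∀ S : {S : Submodule (ZMod 2) V // finrank (ZMod 2) S = k},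
      Fintype {t : Fin k → S.1 // LinearIndependent (ZMod 2) t} := fun S => Fintype.ofFinite _
  rw [Nat.card_eq_fintype_card, Fintype.card_sigma] at hsig
  have hfib : ∀ S : {S : Submodule (ZMod 2) V // finrank (ZMod 2) S = k},
      Fintype.card {t : Fin k → S.1 // LinearIndependent (ZMod 2) t}
        = ∏ i : Fin k, (2^k - 2^(i:ℕ)) := by
    rintro ⟨S, hS⟩
    rw [← Nat.card_eq_fintype_card]
    have := card_linearIndependent (K := ZMod 2) (V := S) (k := k) (by rw [hS])
    simpa [hS] using this
  rw [Finset.sum_congr rfl (fun S _ => hfib S), Finset.sum_const, hcLI, Finset.card_univ,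
    ← Nat.card_eq_fintype_card, smul_eq_mul] at hsig
  -- hsig : N * ∏(2^k-2^i) = ∏(2^m-2^i) over ℕ
  have hden : ∀ i : Fin k, (2:ℕ)^(i:ℕ) ≤ 2^k := fun i => Nat.pow_le_pow_right (by norm_num) i.2.le
  have hnum : ∀ i : Fin k, (2:ℕ)^(i:ℕ) ≤ 2^m := fun i =>
    Nat.pow_le_pow_right (by norm_num) (le_trans i.2.le hk)
  have hcast : ((Nat.card {S : Submodule (ZMod 2) V // finrank (ZMod 2) S = k} : ℚ))
      * ∏ i : Fin k, ((2:ℚ)^k - 2^(i:ℕ)) = ∏ i : Fin k, ((2:ℚ)^m - 2^(i:ℕ)) := by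
    have e1 : (∏ i : Fin k, ((2:ℚ)^k - 2^(i:ℕ)))
        = ((∏ i : Fin k, (2^k - 2^(i:ℕ)) : ℕ) : ℚ) := by
      rw [Nat.cast_prod]
      exact Finset.prod_congr rfl fun i _ => by rw [Nat.cast_sub (hden i)]; push_cast; ring
    have e2 : (∏ i : Fin k, ((2:ℚ)^m - 2^(i:ℕ)))
        = ((∏ i : Fin k, (2^m - 2^(i:ℕ)) : ℕ) : ℚ) := by
      rw [Nat.cast_prod]
      exact Finset.prod_congr rfl fun i _ => by rw [Nat.cast_sub (hnum i)]; push_cast; ring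
    rw [e1, e2, ← Nat.cast_mul, hsig]
  have hdq : ∀ i ∈ (Finset.univ : Finset (Fin k)), ((2:ℚ)^k - 2^(i:ℕ)) ≠ 0 := by
    intro i _
    have : (2:ℚ)^(i:ℕ) < 2^k := by
      apply pow_lt_pow_right₀ (by norm_num) i.2
    linarith
  have hprodne : (∏ i : Fin k, ((2:ℚ)^k - 2^(i:ℕ))) ≠ 0 := Finset.prod_ne_zero_iff.mpr hdq
  rw [gaussBinom_eq_prod_div hk, Finset.prod_range (fun i => (2:ℚ)^m - 2^i),
    Finset.prod_range (fun i => (2:ℚ)^k - 2^i), eq_div_iff hprodne]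
  exact hcast

lemma finrank_comap_mkQ {K W : Type*} [Field K] [AddCommGroup W] [Module K W]
    [FiniteDimensional K W] (p : Submodule K W) (E : Submodule K (W ⧸ p)) :
    finrank K (comap p.mkQ E) = finrank K E + finrank K p := by
  set D := comap p.mkQ E with hD
  have hpD : p ≤ D := le_comap_mkQ p E
  let f : D →ₗ[K] W ⧸ p := p.mkQ ∘ₗ D.subtype
  have hrange : LinearMap.range f = E := by
    rw [LinearMap.range_comp, Submodule.range_subtype, hD,
      Submodule.map_comap_eq_self (by rw [Submodule.range_mkQ]; exact le_top)]
  have hker : LinearMap.ker f = comap D.subtype p := by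
    rw [LinearMap.ker_comp, Submodule.ker_mkQ]
  have h1 := LinearMap.finrank_range_add_finrank_ker f
  rw [hrange, hker] at h1
  rw [← h1, (Submodule.comapSubtypeEquivOfLe hpD).finrank_eq]

/-- For nonzero `v, w ∈ F₂ⁿ` with `v·w = 0`, the number of `k₂`-dimensional subspaces `C₂`
with `v ∈ C₂` and `w ∈ C₂^⊥` equals `[n-2 choose k₂-1]₂`. -/
theorem count_codes_v_in_code_w_in_dual (n k₂ : ℕ) (h1 : 1 ≤ k₂) (h₂ : k₂ ≤ n - 1)
    (v w : Fin n → ZMod 2) (hv : v ≠ 0) (hw : w ≠ 0)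
    (hvw : ∑ i, v i * w i = 0) :
    (Nat.card {C₂ : Submodule (ZMod 2) (Fin n → ZMod 2) //
        Module.finrank (ZMod 2) C₂ = k₂ ∧ v ∈ C₂ ∧ ∀ c ∈ C₂, ∑ i, w i * c i = 0} : ℚ)
      = gaussBinom (n - 2) (k₂ - 1) := by
  classical
  have hn2 : 2 ≤ n := by omega
  let φ : (Fin n → ZMod 2) →ₗ[ZMod 2] ZMod 2 :=
    { toFun := fun x => ∑ i, w i * x i
      map_add' := by intro x y; simp [mul_add, Finset.sum_add_distrib]
      map_smul' := by
        intro c x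
        simp only [Pi.smul_apply, smul_eq_mul, RingHom.id_apply, Finset.mul_sum]
        exact Finset.sum_congr rfl fun i _ => by ring }
  set W := LinearMap.ker φ with hWdef
  have hφv : v ∈ W := by
    simp only [hWdef, LinearMap.mem_ker]
    show ∑ i, w i * v i = 0
    rw [← hvw]; exact Finset.sum_congr rfl fun i _ => mul_comm _ _
  -- finrank W = n - 1
  obtain ⟨j, hj⟩ : ∃ j, w j ≠ 0 := by
    by_contra h; push_neg at h; exact hw (funext fun i => h i)
  have hφj : φ (Pi.single j 1) = w j := by
    simp only [φ, LinearMap.coe_mk, AddHom.coe_mk]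
    simp [Pi.single_apply, mul_ite, Finset.sum_ite_eq']
  have hrange_ne : LinearMap.range φ ≠ ⊥ := by
    intro hbot
    have : φ (Pi.single j 1) = 0 := by
      have := LinearMap.mem_range_self φ (Pi.single j 1)
      rw [hbot] at this; rwa [Submodule.mem_bot] at this
    rw [hφj] at this; exact hj this
  have hrank1 : finrank (ZMod 2) (LinearMap.range φ) = 1 := by
    have hle : finrank (ZMod 2) (LinearMap.range φ) ≤ 1 := by
      have := Submodule.finrank_le (LinearMap.range φ)
      simpa using this
    have hne : finrank (ZMod 2) (LinearMap.range φ) ≠ 0 := by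
      intro h0
      exact hrange_ne (Submodule.finrank_eq_zero.mp h0)
    omega
  have hWrank : finrank (ZMod 2) W = n - 1 := by
    have := LinearMap.finrank_range_add_finrank_ker φ
    rw [hrank1, Module.finrank_fintype_fun_eq_card, Fintype.card_fin, ← hWdef] at this
    omega
  let vW : W := ⟨v, hφv⟩
  have hvW : vW ≠ 0 := fun h => hv (congrArg Subtype.val h)
  set p : Submodule (ZMod 2) W := Submodule.span (ZMod 2) {vW} with hp
  have hprank : finrank (ZMod 2) p = 1 := finrank_span_singleton hvW
  have hQrank : finrank (ZMod 2) (W ⧸ p) = n - 2 := by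
    have := Submodule.finrank_quotient_add_finrank p
    rw [hprank, hWrank] at this
    omega
  -- the bijection
  let F : {E : Submodule (ZMod 2) (W ⧸ p) // finrank (ZMod 2) E = k₂ - 1} →
      {C₂ : Submodule (ZMod 2) (Fin n → ZMod 2) //
        Module.finrank (ZMod 2) C₂ = k₂ ∧ v ∈ C₂ ∧ ∀ c ∈ C₂, ∑ i, w i * c i = 0} := by
    rintro ⟨E, hE⟩
    refine ⟨Submodule.map W.subtype (Submodule.comap p.mkQ E), ?_, ?_, ?_⟩
    · rw [Submodule.finrank_map_subtype_eq, finrank_comap_mkQ, hE, hprank]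
      omega
    · exact ⟨vW, le_comap_mkQ p E (Submodule.mem_span_singleton_self vW), rfl⟩
    · rintro c ⟨y, -, rfl⟩
      exact y.2
  have hFbij : Function.Bijective F := by
    constructor
    · rintro ⟨E, hE⟩ ⟨E', hE'⟩ h
      simp only [F, Subtype.mk.injEq] at h
      have h2 : Submodule.comap p.mkQ E = Submodule.comap p.mkQ E' := by
        have := congrArg (Submodule.comap W.subtype) h
        rwa [Submodule.comap_map_eq_of_injective W.injective_subtype,
          Submodule.comap_map_eq_of_injective W.injective_subtype] at this
      have h3 : E = E' := by
        have := congrArg (Submodule.map p.mkQ) h2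
        rwa [Submodule.map_comap_eq_self (by rw [Submodule.range_mkQ]; exact le_top),
          Submodule.map_comap_eq_self (by rw [Submodule.range_mkQ]; exact le_top)] at this
      simp [h3]
    · rintro ⟨C, hC, hvC, hCW'⟩
      have hCW : C ≤ W := fun x hx => hCW' x hx
      set D : Submodule (ZMod 2) W := Submodule.comap W.subtype C with hDdef
      have hmapD : Submodule.map W.subtype D = C := by
        rw [hDdef, Submodule.map_comap_subtype, inf_of_le_right hCW]
      have hpD : p ≤ D := by
        rw [hp, Submodule.span_singleton_le_iff_mem]
        exact hvC
      refine ⟨⟨Submodule.map p.mkQ D, ?_⟩, ?_⟩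
      · have hcomap : Submodule.comap p.mkQ (Submodule.map p.mkQ D) = D := by
          rw [Submodule.comap_map_mkQ, sup_of_le_right hpD]
        have hD1 : finrank (ZMod 2) D = k₂ := by
          rw [← hmapD, Submodule.finrank_map_subtype_eq] at hC
          exact hC
        have := finrank_comap_mkQ p (Submodule.map p.mkQ D)
        rw [hcomap, hprank, hD1] at this
        omega
      · simp only [F]
        apply Subtype.ext
        simp only
        rw [Submodule.comap_map_mkQ, sup_of_le_right hpD, hmapD]
  rw [← Nat.card_congr (Equiv.ofBijective F hFbij), card_submodules (by rw [hQrank]; omega),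
    hQrank]
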